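/- Let P be a closed convex cone in ℝ^d that is spanning (P − P = ℝ^d) and pointed (P ∩ (−P) = {0}), and let v_1, …, v_d be a basis of ℝ^d consisting of vectors in the interior of P. Let 𝒳 be a nonempty collection of closed subsets A ⊆ ℝ^d with ∅ ≠ A ≠ ℝ^d and −P + A ⊆ A, such that A + a ∈ 𝒳 for every A ∈ 𝒳 and every a ∈ P. For A ∈ 𝒳 and i ∈ {1, …, d}, let f_i^A : ℝ^d → ℝ be the function determined by {t ∈ ℝ : x + t·v_i ∈ A} = (−∞, f_i^A(x)] for all x ∈ ℝ^d. Assume that for all A, B ∈ 𝒳 and all i, j ∈ {1, …, d}: if f_i^A(0) ≤ f_i^B(0) then f_j^A(0) ≤ f_j^B(0). Then for all A, B ∈ 𝒳, either A ⊆ B or B ⊆ A. -/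

import Mathlib

open Pointwise

/-- Let `P` be a closed convex cone in `ℝ^d`, spanning and pointed,
and `v₁, …, v_d` a basis of `ℝ^d` of vectors in `Int(P)`. Let `𝒳` be a nonempty
collection of closed sets `A` with `∅ ≠ A ≠ ℝ^d` and `-P + A ⊆ A`, closed under
translation by elements of `P`. With `f_i^A` determined by
`{t : x + t•v_i ∈ A} = (-∞, f_i^A x]`, assume that for all `A, B ∈ 𝒳` and all `i, j`:
`f_i^A 0 ≤ f_i^B 0 → f_j^A 0 ≤ f_j^B 0`. Then any two members of `𝒳` are comparable
under inclusion. -/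
theorem stmt_10 {d : ℕ}
    (P : Set (EuclideanSpace ℝ (Fin d)))
    (hPclosed : IsClosed P) (hPconvex : Convex ℝ P)
    (hPcone : ∀ (c : ℝ), 0 ≤ c → ∀ x ∈ P, c • x ∈ P)
    (hPspan : P - P = Set.univ)
    (hPpointed : P ∩ (-P) = {0})
    (v : Module.Basis (Fin d) ℝ (EuclideanSpace ℝ (Fin d)))
    (hv : ∀ i, v i ∈ interior P)
    (𝒳 : Set (Set (EuclideanSpace ℝ (Fin d)))) (h𝒳ne : 𝒳.Nonempty)
    (h𝒳 : ∀ A ∈ 𝒳, IsClosed A ∧ A.Nonempty ∧ A ≠ Set.univ ∧ -P + A ⊆ A)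
    (h𝒳trans : ∀ A ∈ 𝒳, ∀ a ∈ P, (· + a) '' A ∈ 𝒳)
    (f : Set (EuclideanSpace ℝ (Fin d)) → Fin d → EuclideanSpace ℝ (Fin d) → ℝ)
    (hf : ∀ A ∈ 𝒳, ∀ (i : Fin d) (x : EuclideanSpace ℝ (Fin d)),
      {t : ℝ | x + t • v i ∈ A} = Set.Iic (f A i x))
    (hcomp : ∀ A ∈ 𝒳, ∀ B ∈ 𝒳, ∀ i j : Fin d,
      f A i 0 ≤ f B i 0 → f A j 0 ≤ f B j 0) :
    ∀ A ∈ 𝒳, ∀ B ∈ 𝒳, A ⊆ B ∨ B ⊆ A := by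
  classical
  intro A hA B hB
  by_contra hcon
  push_neg at hcon
  obtain ⟨x, hxA, hxB⟩ := Set.not_subset.mp hcon.1
  obtain ⟨y, hyB, hyA⟩ := Set.not_subset.mp hcon.2
  cases isEmpty_or_nonempty (Fin d) with
  | inl hE =>
      haveI : Subsingleton (EuclideanSpace ℝ (Fin d)) :=
        ⟨fun a b => PiLp.ext fun i => (hE.false i).elim⟩
      exact hxB (Subsingleton.elim x y ▸ hyB)
  | inr hNE =>
    obtain ⟨i⟩ := hNE
    have hIic : ∀ a b : ℝ, Set.Iic a = Set.Iic b → a = b := by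
      intro a b h
      have h1 : a ∈ Set.Iic b := h ▸ Set.mem_Iic.mpr le_rfl
      have h2 : b ∈ Set.Iic a := h.symm ▸ Set.mem_Iic.mpr le_rfl
      exact le_antisymm h1 h2
    have hvP : ∀ j, v j ∈ P := fun j => interior_subset (hv j)
    have h0P : (0 : EuclideanSpace ℝ (Fin d)) ∈ P := by
      have := hPcone 0 le_rfl (v i) (hvP i)
      simpa using this
    have haddP : ∀ p ∈ P, ∀ q ∈ P, p + q ∈ P := by
      intro p hp q hq
      have h2 := hPconvex hp hq (by norm_num : (0:ℝ) ≤ 1/2) (by norm_num : (0:ℝ) ≤ 1/2)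
        (by norm_num)
      have h3 := hPcone 2 (by norm_num) _ h2
      have e : (2:ℝ) • ((1/2:ℝ) • p + (1/2:ℝ) • q) = p + q := by
        rw [smul_add, smul_smul, smul_smul]
        norm_num
      rwa [e] at h3
    -- membership criterion
    have hmem : ∀ X ∈ 𝒳, ∀ (k : Fin d) (z : EuclideanSpace ℝ (Fin d)),
        (z ∈ X ↔ 0 ≤ f X k z) := by
      intro X hX k z
      have h := Set.ext_iff.mp (hf X hX k z) 0
      simpa using h
    -- exact shift along v k
    have hshift : ∀ X ∈ 𝒳, ∀ (k : Fin d) (z : EuclideanSpace ℝ (Fin d)) (τ : ℝ),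
        f X k (z + τ • v k) = f X k z - τ := by
      intro X hX k z τ
      apply hIic
      rw [← hf X hX k (z + τ • v k)]
      ext t
      simp only [Set.mem_setOf_eq, Set.mem_Iic]
      rw [add_assoc, ← add_smul]
      have h := Set.ext_iff.mp (hf X hX k z) (τ + t)
      simp only [Set.mem_setOf_eq, Set.mem_Iic] at h
      rw [h]
      constructor <;> intro <;> linarith
    -- f of a translate
    have htr : ∀ X ∈ 𝒳, ∀ p ∈ P, ∀ k : Fin d,
        f ((· + p) '' X) k 0 = f X k (-p) := by
      intro X hX p hp k
      have hXp := h𝒳trans X hX p hp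
      apply hIic
      rw [← hf _ hXp k 0, ← hf X hX k (-p)]
      ext t
      simp only [Set.mem_setOf_eq, Set.mem_image]
      constructor
      · rintro ⟨a, ha, hae⟩
        have h2 : a = -p + t • v k := by
          have h3 : a = 0 + t • v k - p := eq_sub_of_add_eq hae
          rw [h3]; abel
        exact h2 ▸ ha
      · intro h
        refine ⟨-p + t • v k, h, ?_⟩
        abel
    -- comparison rule at translated points
    have hrule : ∀ X ∈ 𝒳, ∀ Y ∈ 𝒳, ∀ p ∈ P, ∀ q ∈ P, ∀ k l : Fin d,
        f X k (-p) ≤ f Y k (-q) → f X l (-p) ≤ f Y l (-q) := by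
      intro X hX Y hY p hp q hq k l h
      rw [← htr X hX p hp k, ← htr Y hY q hq k] at h
      have h2 := hcomp _ (h𝒳trans X hX p hp) _ (h𝒳trans Y hY q hq) k l h
      rwa [htr X hX p hp l, htr Y hY q hq l] at h2
    -- single-step upward transport
    have hstep : ∀ X ∈ 𝒳, ∀ Y ∈ 𝒳, ∀ p ∈ P, ∀ q ∈ P, ∀ j : Fin d, ∀ σ : ℝ, 0 ≤ σ →
        f X i (-(p + σ • v j)) ≤ f Y i (-(q + σ • v j)) → f X i (-p) ≤ f Y i (-q) := by
      intro X hX Y hY p hp q hq j σ hσ h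
      have hσv : σ • v j ∈ P := hPcone σ hσ _ (hvP j)
      have hp' : p + σ • v j ∈ P := haddP p hp _ hσv
      have hq' : q + σ • v j ∈ P := haddP q hq _ hσv
      have h1 := hrule X hX Y hY _ hp' _ hq' i j h
      have e1 : ∀ w : EuclideanSpace ℝ (Fin d), -(w + σ • v j) = -w + (-σ) • v j := by
        intro w; rw [neg_smul]; abel
      rw [e1 p, e1 q, hshift X hX j (-p) (-σ), hshift Y hY j (-q) (-σ)] at h1
      have h2 : f X j (-p) ≤ f Y j (-q) := by linarith
      exact hrule X hX Y hY p hp q hq j i h2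
    -- sums of nonneg multiples of basis vectors lie in P
    have hsumP : ∀ (S : Finset (Fin d)) (σ : Fin d → ℝ), (∀ j, 0 ≤ σ j) →
        (∑ j ∈ S, σ j • v j) ∈ P := by
      intro S σ hσ
      induction S using Finset.induction_on with
      | empty => simpa using h0P
      | @insert a s ha ih =>
          rw [Finset.sum_insert ha]
          exact haddP _ (hPcone _ (hσ a) _ (hvP a)) _ ih
    -- iterated upward transport
    have hiter : ∀ (S : Finset (Fin d)) (σ : Fin d → ℝ), (∀ j, 0 ≤ σ j) →
        ∀ X ∈ 𝒳, ∀ Y ∈ 𝒳, ∀ p ∈ P, ∀ q ∈ P,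
        f X i (-(p + ∑ j ∈ S, σ j • v j)) ≤ f Y i (-(q + ∑ j ∈ S, σ j • v j)) →
        f X i (-p) ≤ f Y i (-q) := by
      intro S σ hσ
      induction S using Finset.induction_on with
      | empty =>
          intro X hX Y hY p hp q hq h
          simpa using h
      | @insert a s ha ih =>
          intro X hX Y hY p hp q hq h
          rw [Finset.sum_insert ha] at h
          have hsum : (∑ j ∈ s, σ j • v j) ∈ P := hsumP s σ hσ
          have e : ∀ w : EuclideanSpace ℝ (Fin d),
              w + (σ a • v a + ∑ j ∈ s, σ j • v j)
                = (w + ∑ j ∈ s, σ j • v j) + σ a • v a := by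
            intro w; abel
          rw [e p, e q] at h
          have h2 := hstep X hX Y hY _ (haddP p hp _ hsum) _ (haddP q hq _ hsum)
            a (σ a) (hσ a) h
          exact ih X hX Y hY p hp q hq h2
    -- reach lemma: for any z there is s ≥ 0 with s•v i - z ∈ P
    have hreach : ∀ z : EuclideanSpace ℝ (Fin d), ∃ s : ℝ, 0 ≤ s ∧ s • v i - z ∈ P := by
      intro z
      have hP_nhds : P ∈ nhds (v i) := mem_interior_iff_mem_nhds.mp (hv i)
      obtain ⟨ε, hε, hball⟩ := Metric.mem_nhds_iff.mp hP_nhds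
      set s : ℝ := ‖z‖ / ε + 1 with hs
      have hs0 : 0 < s := by positivity
      refine ⟨s, le_of_lt hs0, ?_⟩
      have hmemball : v i - s⁻¹ • z ∈ Metric.ball (v i) ε := by
        rw [Metric.mem_ball, dist_eq_norm]
        have e2 : v i - s⁻¹ • z - v i = -(s⁻¹ • z) := by abel
        rw [e2, norm_neg, norm_smul, norm_inv, Real.norm_eq_abs, abs_of_pos hs0]
        have hse : s * ε = ‖z‖ + ε := by
          rw [hs, add_mul, div_mul_cancel₀ _ (ne_of_gt hε), one_mul]
        rw [inv_mul_lt_iff₀ hs0, hse]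
        linarith
      have h3 := hPcone s (le_of_lt hs0) _ (hball hmemball)
      have e3 : s • (v i - s⁻¹ • z) = s • v i - z := by
        rw [smul_sub, smul_smul, mul_inv_cancel₀ (ne_of_gt hs0), one_smul]
      rwa [e3] at h3
    obtain ⟨s, hs0, hsP⟩ := hreach x
    obtain ⟨r, hr0, hrP⟩ := hreach y
    set p₀ : EuclideanSpace ℝ (Fin d) := s • v i - x with hp₀def
    set q₀ : EuclideanSpace ℝ (Fin d) := r • v i - y with hq₀def
    have hnp₀ : -p₀ = x + (-s) • v i := by
      rw [hp₀def, neg_smul]; abel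
    have hnq₀ : -q₀ = y + (-r) • v i := by
      rw [hq₀def, neg_smul]; abel
    have hfAx : 0 ≤ f A i x := (hmem A hA i x).mp hxA
    have hfBx : f B i x < 0 := not_le.mp (fun h => hxB ((hmem B hB i x).mpr h))
    have hfBy : 0 ≤ f B i y := (hmem B hB i y).mp hyB
    have hfAy : f A i y < 0 := not_le.mp (fun h => hyA ((hmem A hA i y).mpr h))
    have fact1 : f B i (-p₀) < f A i (-p₀) := by
      rw [hnp₀, hshift A hA i x (-s), hshift B hB i x (-s)]
      linarith
    have fact2 : f A i (-q₀) < f B i (-q₀) := by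
      rw [hnq₀, hshift A hA i y (-r), hshift B hB i y (-r)]
      linarith
    set c : Fin d → ℝ := fun j => v.repr (q₀ - p₀) j with hcdef
    have hmax : ∀ a : ℝ, max a 0 - max (-a) 0 = a := by
      intro a
      rcases le_total a 0 with h | h
      · rw [max_eq_right h, max_eq_left (by linarith : (0:ℝ) ≤ -a)]
        ring
      · rw [max_eq_left h, max_eq_right (by linarith : -a ≤ (0:ℝ))]
        ring
    have hkey : p₀ + (∑ j, max (c j) 0 • v j) = q₀ + (∑ j, max (-(c j)) 0 • v j) := by
      have h1 : (∑ j, max (c j) 0 • v j) - (∑ j, max (-(c j)) 0 • v j) = q₀ - p₀ := by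
        rw [← Finset.sum_sub_distrib]
        calc (∑ j, (max (c j) 0 • v j - max (-(c j)) 0 • v j))
            = ∑ j, c j • v j := by
              refine Finset.sum_congr rfl fun j _ => ?_
              rw [← sub_smul, hmax]
          _ = q₀ - p₀ := by
              rw [hcdef]
              exact v.sum_repr (q₀ - p₀)
      have h2 : (∑ j, max (c j) 0 • v j) = (∑ j, max (-(c j)) 0 • v j) + (q₀ - p₀) := by
        rw [← h1]; abel
      rw [h2]; abel
    have hgnn : ∀ j, (0:ℝ) ≤ max (c j) 0 := fun j => le_max_right _ _
    have hg'nn : ∀ j, (0:ℝ) ≤ max (-(c j)) 0 := fun j => le_max_right _ _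
    have t1 : f B i (-(p₀ + ∑ j, max (c j) 0 • v j))
        < f A i (-(p₀ + ∑ j, max (c j) 0 • v j)) := by
      by_contra hcon2
      push_neg at hcon2
      have := hiter Finset.univ _ hgnn A hA B hB p₀ hsP p₀ hsP hcon2
      linarith
    have t2 : f A i (-(q₀ + ∑ j, max (-(c j)) 0 • v j))
        < f B i (-(q₀ + ∑ j, max (-(c j)) 0 • v j)) := by
      by_contra hcon2
      push_neg at hcon2
      have := hiter Finset.univ _ hg'nn B hB A hA q₀ hrP q₀ hrP hcon2
      linarith
    rw [hkey] at t1
    linarith
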